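/- For all n ≥ 0 and x ∈ [−1,1], the Chebyshev polynomial of the second kind satisfies U_n(x) = Σ_{k=0}^{n} P_k(x)·P_{n−k}(x), where P_j denotes the Legendre polynomial of degree j. -/

import Mathlib

open Polynomial

/-- The Legendre polynomial of degree `n` (Rodrigues' formula). -/
noncomputable def legendre (n : ℕ) : Polynomial ℝ :=
  C (1/((2:ℝ)^n * n.factorial)) * (derivative^[n] ((X^2 - 1)^n))

lemma legendre_zero : legendre 0 = 1 := by simp [legendre]

lemma legendre_one : legendre 1 = X := by
  have h : derivative ((X^2 - 1 : ℝ[X])^1) = C 2 * X := by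
    simp [derivative_mul, map_ofNat, one_add_one_eq_two]
  rw [legendre, Function.iterate_one, h, ← mul_assoc, ← C_mul]
  norm_num

lemma eval_Q (x : ℝ) (n : ℕ) :
    eval x (derivative^[n] ((X^2-1:ℝ[X])^n)) = (2:ℝ)^n * n.factorial * eval x (legendre n) := by
  have h1 : ((2:ℝ)^n) ≠ 0 := by positivity
  have h2 : ((n.factorial:ℝ)) ≠ 0 := Nat.cast_ne_zero.2 n.factorial_ne_zero
  rw [legendre, eval_mul, eval_C]
  field_simp

lemma eval_dQ (x : ℝ) (n : ℕ) :
    eval x (derivative (derivative^[n] ((X^2-1:ℝ[X])^n)))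
      = (2:ℝ)^n * n.factorial * eval x (derivative (legendre n)) := by
  have h1 : ((2:ℝ)^n) ≠ 0 := by positivity
  have h2 : ((n.factorial:ℝ)) ≠ 0 := Nat.cast_ne_zero.2 n.factorial_ne_zero
  rw [legendre, derivative_C_mul, eval_mul, eval_C]
  field_simp

lemma iterX (n : ℕ) : ∀ f : ℝ[X],
    derivative^[n+1] (X * f) = X * derivative^[n+1] f + ((n:ℝ[X])+1) * derivative^[n] f := by
  induction n with
  | zero => intro f; simp [derivative_mul]; ring
  | succ k ih =>
      intro f
      rw [Function.iterate_succ_apply, derivative_mul, derivative_X, one_mul,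
        iterate_map_add, ih (derivative f),
        ← Function.iterate_succ_apply, ← Function.iterate_succ_apply]
      push_cast
      ring
lemma iterW (n : ℕ) : ∀ f : ℝ[X],
    derivative^[n+2] ((X^2-1) * f) = (X^2-1) * derivative^[n+2] f
      + (2*(n:ℝ[X])+4) * (X * derivative^[n+1] f)
      + ((n:ℝ[X])+2) * ((n:ℝ[X])+1) * derivative^[n] f := by
  have h : ∀ f : ℝ[X], derivative ((X^2-1) * f) = (X^2-1) * derivative f + 2 * (X * f) := by
    intro f; simp [derivative_mul, map_ofNat]; ring
  have h2 : ∀ (m : ℕ) (f : ℝ[X]), derivative^[m] ((2:ℝ[X]) * (X * f)) = 2 * derivative^[m] (X * f) := by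
    intro m f; simpa [map_ofNat] using iterate_derivative_C_mul (2:ℝ) (X*f) m
  induction n with
  | zero =>
      intro f
      rw [show (0+2:ℕ) = 1+1 from rfl, Function.iterate_succ_apply, h f,
        iterate_map_add, Function.iterate_one, h (derivative f)]
      have h3 : derivative ((2:ℝ[X]) * (X * f)) = 2 * (f + X * derivative f) := by
        simp [derivative_mul, map_ofNat]; try ring
      rw [h3]
      norm_num [Function.iterate_succ_apply', Function.iterate_zero_apply]
      ring
  | succ k ih =>
      intro f
      rw [Function.iterate_succ_apply, h f, iterate_map_add, ih (derivative f), h2,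
        show k+2 = (k+1)+1 from rfl, iterX (k+1) f,
        ← Function.iterate_succ_apply, ← Function.iterate_succ_apply, ← Function.iterate_succ_apply]
      push_cast
      ring

lemma derivW (n : ℕ) : derivative ((X^2-1 : ℝ[X])^(n+1)) = (2*(n:ℝ[X])+2) * (X * (X^2-1)^n) := by
  rw [derivative_pow]
  push_cast
  simp [derivative_mul, map_ofNat]
  ring

lemma castC (n : ℕ) : ((n:ℝ[X])) = C ((n:ℝ)) := by simp [C_eq_natCast]

lemma lemI (m : ℕ) : derivative^[m+2] ((X^2-1:ℝ[X])^(m+2))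
    = (2*(m:ℝ[X])+4) * (X * derivative^[m+1] ((X^2-1)^(m+1)))
      + (2*((m:ℝ[X])+2)*((m:ℝ[X])+1)) * derivative^[m] ((X^2-1)^(m+1)) := by
  rw [Function.iterate_succ_apply, derivW (m+1)]
  have hc : (2*((m+1:ℕ):ℝ[X])+2) * (X * (X^2-1:ℝ[X])^(m+1))
      = C (2*(m:ℝ)+4) * (X * (X^2-1)^(m+1)) := by
    simp only [map_add, map_mul, map_ofNat, ← castC]
    push_cast; ring
  rw [hc, iterate_derivative_C_mul, iterX m]
  simp only [map_add, map_mul, map_ofNat, ← castC]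
  push_cast
  ring

lemma lemii (m : ℕ) : derivative^[m+2] ((X^2-1:ℝ[X])^(m+2))
    = (X^2-1) * derivative ( derivative^[m+1] ((X^2-1:ℝ[X])^(m+1)) )
      + (2*(m:ℝ[X])+4) * (X * derivative^[m+1] ((X^2-1)^(m+1)))
      + ((m:ℝ[X])+2) * ((m:ℝ[X])+1) * derivative^[m] ((X^2-1)^(m+1)) := by
  have h : ((X^2-1:ℝ[X])^(m+2)) = (X^2-1) * (X^2-1)^(m+1) := by ring
  rw [h, iterW m ((X^2-1:ℝ[X])^(m+1)), Function.iterate_succ_apply']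

lemma lemiii (m : ℕ) : derivative^[m+2] ((X^2-1:ℝ[X])^(m+2))
    = 2*(X^2-1) * derivative ( derivative^[m+1] ((X^2-1:ℝ[X])^(m+1)) )
      + (2*(m:ℝ[X])+4) * (X * derivative^[m+1] ((X^2-1)^(m+1))) := by
  linear_combination 2 * lemii m - lemI m

lemma lemB (m : ℕ) : derivative ( derivative^[m+1] ((X^2-1:ℝ[X])^(m+1)) )
    = (2*(m:ℝ[X])+2) * (X * derivative ( derivative^[m] ((X^2-1:ℝ[X])^m) ))
      + (2*((m:ℝ[X])+1)^2) * derivative^[m] ((X^2-1:ℝ[X])^m) := by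
  have e : derivative ( derivative^[m+1] ((X^2-1:ℝ[X])^(m+1)) )
      = derivative^[m+1] (derivative ((X^2-1:ℝ[X])^(m+1))) := by
    exact (Function.iterate_succ_apply' derivative (m+1) _).symm.trans
      (Function.iterate_succ_apply derivative (m+1) _)
  rw [e, derivW m]
  have hc : (2*(m:ℝ[X])+2) * (X * (X^2-1:ℝ[X])^m)
      = C (2*(m:ℝ)+2) * (X * (X^2-1)^m) := by
    simp only [map_add, map_mul, map_ofNat, ← castC]
  rw [hc, iterate_derivative_C_mul, iterX m, Function.iterate_succ_apply']
  simp only [map_add, map_mul, map_ofNat, ← castC]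
  ring

lemma hA (x : ℝ) : ∀ n : ℕ, ((n:ℝ)+1) * eval x (legendre (n+1))
    = (x^2-1) * eval x (derivative (legendre n)) + ((n:ℝ)+1) * (x * eval x (legendre n)) := by
  intro n
  match n with
  | 0 => simp [legendre_zero, legendre_one]
  | (k+1) =>
    have h1 : ((2:ℝ)^(k+1)) ≠ 0 := by positivity
    have h2 : (((k+1).factorial:ℝ)) ≠ 0 := Nat.cast_ne_zero.2 (k+1).factorial_ne_zero
    have hne : ((2:ℝ)^(k+2) * ((k+2).factorial:ℝ)) ≠ 0 := by positivity
    have h := congrArg (eval x) (lemiii k)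
    simp only [eval_mul, eval_add, eval_sub, eval_pow, eval_X, eval_one, eval_ofNat,
      eval_natCast, eval_Q, eval_dQ] at h
    -- h : 2^(k+2)*(k+2)! * p(k+2) = 2*(x^2-1)*(2^(k+1)*(k+1)! * dp(k+1)) + (2k+4)*(x*(2^(k+1)*(k+1)!*p(k+1)))
    apply mul_left_cancel₀ hne
    rw [show k+1+1 = k+2 from rfl]
    push_cast [Nat.factorial_succ] at h ⊢
    linear_combination ((k:ℝ)+2) * h

lemma hB (x : ℝ) (n : ℕ) : eval x (derivative (legendre (n+1)))
    = x * eval x (derivative (legendre n)) + ((n:ℝ)+1) * eval x (legendre n) := by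
  have hne : ((2:ℝ)^(n+1) * ((n+1).factorial:ℝ)) ≠ 0 := by positivity
  have h := congrArg (eval x) (lemB n)
  simp only [eval_mul, eval_add, eval_sub, eval_pow, eval_X, eval_one, eval_ofNat,
    eval_natCast, eval_Q, eval_dQ] at h
  apply mul_left_cancel₀ hne
  push_cast [Nat.factorial_succ] at h ⊢
  linear_combination h

lemma hBon (x : ℝ) : ∀ m : ℕ, ((m:ℝ)+1) * eval x (legendre (m+1))
    = (2*(m:ℝ)+1) * (x * eval x (legendre m)) - (m:ℝ) * eval x (legendre (m-1)) := by
  intro m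
  match m with
  | 0 => simp [legendre_zero, legendre_one]
  | (k+1) =>
    have h1 := hA x (k+1)
    have h2 := hB x k
    have h3 := hA x k
    rw [show k+1-1 = k from rfl]
    push_cast at h1 h2 h3 ⊢
    linear_combination h1 + (x^2-1) * h2 - x * h3


lemma helper1 (x : ℝ) (M : ℕ) :
    2 * ∑ j ∈ Finset.range (M+1), ((M-j:ℕ):ℝ) * (eval x (legendre j) * eval x (legendre (M-j)))
      = (M:ℝ) * ∑ j ∈ Finset.range (M+1), eval x (legendre j) * eval x (legendre (M-j)) := by
  have e2 : ∑ j ∈ Finset.range (M+1), ((M-j:ℕ):ℝ) * (eval x (legendre j) * eval x (legendre (M-j)))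
      = ∑ j ∈ Finset.range (M+1), (j:ℝ) * (eval x (legendre j) * eval x (legendre (M-j))) := by
    rw [← Finset.sum_range_reflect
      (fun j => (j:ℝ) * (eval x (legendre j) * eval x (legendre (M-j)))) (M+1)]
    apply Finset.sum_congr rfl
    intro j hj
    have hj' : j ≤ M := Nat.lt_succ_iff.mp (Finset.mem_range.mp hj)
    have e : M+1-1-j = M-j := by omega
    have e' : M-(M-j) = j := by omega
    simp only [e, e']
    ring
  rw [two_mul]
  nth_rewrite 2 [e2]
  rw [← Finset.sum_add_distrib, Finset.mul_sum]
  apply Finset.sum_congr rfl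
  intro j hj
  have hj' : j ≤ M := Nat.lt_succ_iff.mp (Finset.mem_range.mp hj)
  have e : ((M-j:ℕ):ℝ) = (M:ℝ) - (j:ℝ) := by
    push_cast [Nat.cast_sub hj']; ring
  rw [e]; ring

lemma helper2 (x : ℝ) (M : ℕ) :
    2 * ∑ j ∈ Finset.range (M+2), ((M+1-j:ℕ):ℝ) * (eval x (legendre j) * eval x (legendre (M-j)))
      = ((M:ℝ)+2) * ∑ j ∈ Finset.range (M+1), eval x (legendre j) * eval x (legendre (M-j)) := by
  have drop : ∑ j ∈ Finset.range (M+2), ((M+1-j:ℕ):ℝ) * (eval x (legendre j) * eval x (legendre (M-j)))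
      = ∑ j ∈ Finset.range (M+1), (((M-j:ℕ):ℝ)+1) * (eval x (legendre j) * eval x (legendre (M-j))) := by
    rw [Finset.sum_range_succ]
    simp only [Nat.sub_self, Nat.cast_zero, zero_mul, add_zero]
    apply Finset.sum_congr rfl
    intro j hj
    have hj' : j ≤ M := Nat.lt_succ_iff.mp (Finset.mem_range.mp hj)
    have e : M+1-j = (M-j)+1 := by omega
    rw [e]; push_cast; ring
  have e2 : ∑ j ∈ Finset.range (M+1), (((M-j:ℕ):ℝ)+1) * (eval x (legendre j) * eval x (legendre (M-j)))
      = ∑ j ∈ Finset.range (M+1), ((j:ℝ)+1) * (eval x (legendre j) * eval x (legendre (M-j))) := by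
    rw [← Finset.sum_range_reflect
      (fun j => ((j:ℝ)+1) * (eval x (legendre j) * eval x (legendre (M-j)))) (M+1)]
    apply Finset.sum_congr rfl
    intro j hj
    have hj' : j ≤ M := Nat.lt_succ_iff.mp (Finset.mem_range.mp hj)
    have e : M+1-1-j = M-j := by omega
    have e' : M-(M-j) = j := by omega
    simp only [e, e']
    ring
  rw [drop, two_mul]
  nth_rewrite 2 [e2]
  rw [← Finset.sum_add_distrib, Finset.mul_sum]
  apply Finset.sum_congr rfl
  intro j hj
  have hj' : j ≤ M := Nat.lt_succ_iff.mp (Finset.mem_range.mp hj)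
  have e : ((M-j:ℕ):ℝ) = (M:ℝ) - (j:ℝ) := by
    push_cast [Nat.cast_sub hj']; ring
  rw [e]; ring

noncomputable def cL (x : ℝ) (n : ℕ) : ℝ :=
  ∑ k ∈ Finset.range (n+1), eval x (legendre k) * eval x (legendre (n-k))

lemma crec (x : ℝ) (n : ℕ) : cL x (n+2) = 2*x*cL x (n+1) - cL x n := by
  show cL x (n+1+1) = 2*x*cL x (n+1) - cL x n
  set N := n+1 with hN
  -- Bonnet applied termwise
  have key : ∀ j ∈ Finset.range (N+1),
      (((N-j:ℕ):ℝ)+1) * (eval x (legendre j) * eval x (legendre (N-j+1)))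
        = (2*((N-j:ℕ):ℝ)+1)*(x*(eval x (legendre j) * eval x (legendre (N-j))))
          - ((N-j:ℕ):ℝ)*(eval x (legendre j) * eval x (legendre (N-j-1))) := by
    intro j hj
    linear_combination (eval x (legendre j)) * hBon x (N-j)
  have hsum := Finset.sum_congr rfl key
  rw [Finset.sum_sub_distrib] at hsum
  -- fold x out of middle sum
  have hx : ∑ j ∈ Finset.range (N+1),
      (2*((N-j:ℕ):ℝ)+1)*(x*(eval x (legendre j) * eval x (legendre (N-j))))
      = x * ∑ j ∈ Finset.range (N+1),
          (2*((N-j:ℕ):ℝ)+1)*(eval x (legendre j) * eval x (legendre (N-j))) := by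
    rw [Finset.mul_sum]
    exact Finset.sum_congr rfl fun j hj => by ring
  rw [hx] at hsum
  -- three sum identities
  have hc1 : 2 * ∑ j ∈ Finset.range (N+1),
      (((N-j:ℕ):ℝ)+1) * (eval x (legendre j) * eval x (legendre (N-j+1)))
      = ((N:ℝ)+1) * cL x (N+1) := by
    have e1 : ∑ j ∈ Finset.range (N+2),
        ((N+1-j:ℕ):ℝ) * (eval x (legendre j) * eval x (legendre (N+1-j)))
        = ∑ j ∈ Finset.range (N+1),
            (((N-j:ℕ):ℝ)+1) * (eval x (legendre j) * eval x (legendre (N-j+1))) := by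
      rw [Finset.sum_range_succ]
      simp only [Nat.sub_self, Nat.cast_zero, zero_mul, add_zero]
      apply Finset.sum_congr rfl
      intro j hj
      have hj' : j ≤ N := Nat.lt_succ_iff.mp (Finset.mem_range.mp hj)
      have e : N+1-j = (N-j)+1 := by omega
      rw [e]; push_cast; ring
    have h1 := helper1 x (N+1)
    rw [e1] at h1
    have hcl : cL x (N+1) = ∑ j ∈ Finset.range (N+1+1),
        eval x (legendre j) * eval x (legendre (N+1-j)) := rfl
    rw [hcl]
    push_cast at h1 ⊢
    linear_combination h1
  have hc2 : 2 * ∑ j ∈ Finset.range (N+1),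
      (2*((N-j:ℕ):ℝ)+1)*(eval x (legendre j) * eval x (legendre (N-j)))
      = (2*(N:ℝ)+2) * cL x N := by
    have hsplit : ∑ j ∈ Finset.range (N+1),
        (2*((N-j:ℕ):ℝ)+1)*(eval x (legendre j) * eval x (legendre (N-j)))
        = 2*∑ j ∈ Finset.range (N+1),
              ((N-j:ℕ):ℝ)*(eval x (legendre j) * eval x (legendre (N-j)))
          + ∑ j ∈ Finset.range (N+1), eval x (legendre j) * eval x (legendre (N-j)) := by
      rw [Finset.mul_sum, ← Finset.sum_add_distrib]
      exact Finset.sum_congr rfl fun j _ => by ring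
    have h1 := helper1 x N
    have hcl : cL x N = ∑ j ∈ Finset.range (N+1),
        eval x (legendre j) * eval x (legendre (N-j)) := rfl
    rw [hsplit, hcl]
    linear_combination 2*h1
  have hc3 : 2 * ∑ j ∈ Finset.range (N+1),
      ((N-j:ℕ):ℝ)*(eval x (legendre j) * eval x (legendre (N-j-1)))
      = ((N:ℝ)+1) * cL x n := by
    rw [hN]
    have e3 : ∑ j ∈ Finset.range (n+1+1),
        ((n+1-j:ℕ):ℝ)*(eval x (legendre j) * eval x (legendre (n+1-j-1)))
        = ∑ j ∈ Finset.range (n+2),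
            ((n+1-j:ℕ):ℝ)*(eval x (legendre j) * eval x (legendre (n-j))) := by
      apply Finset.sum_congr rfl
      intro j hj
      rw [show n+1-j-1 = n-j from by omega]
    have h2 := helper2 x n
    have hcl : cL x n = ∑ j ∈ Finset.range (n+1),
        eval x (legendre j) * eval x (legendre (n-j)) := rfl
    rw [e3, hcl]
    push_cast
    linear_combination h2
  have hNe : ((N:ℝ)+1) ≠ 0 := by positivity
  apply mul_left_cancel₀ hNe
  linear_combination -hc1 + 2*hsum + x*hc2 - hc3

lemma main (x : ℝ) : ∀ n : ℕ, (Polynomial.Chebyshev.U ℝ (n:ℤ)).eval x = cL x n := by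
  intro n
  induction n using Nat.twoStepInduction with
  | zero =>
      simp [Polynomial.Chebyshev.U_zero, cL, legendre_zero]
  | one =>
      have : ((1:ℕ):ℤ) = 1 := rfl
      rw [this, Polynomial.Chebyshev.U_one]
      simp [cL, Finset.sum_range_succ, legendre_zero, legendre_one]
      try ring
  | more k ih1 ih2 =>
      have hc : ((k+2:ℕ):ℤ) = (k:ℤ)+2 := by push_cast; ring
      rw [hc, Polynomial.Chebyshev.U_add_two]
      have h1 : ((k+1:ℕ):ℤ) = (k:ℤ)+1 := by push_cast; ring
      rw [← h1] at *
      simp only [eval_sub, eval_mul, eval_ofNat, eval_X]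
      rw [ih1, ih2]  -- ih ordering?
      rw [crec x k]

/-- For `n ≥ 0` and `x ∈ [−1,1]`,
`U_n(x) = Σ_{k=0}^{n} P_k(x) P_{n−k}(x)` where `P_j` is the Legendre polynomial. -/
theorem stmt17 (n : ℕ) (x : ℝ) (hx : x ∈ Set.Icc (-1:ℝ) 1) :
    (Polynomial.Chebyshev.U ℝ (n:ℤ)).eval x
      = ∑ k ∈ Finset.range (n+1), (legendre k).eval x * (legendre (n-k)).eval x := by
  exact (main x n).trans rfl
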